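/- Let n ≥ 2 be an integer and let f : ℝ → ℝ be continuous on [0,∞) and satisfy, for every t ≥ 0, the integral equation f(t) = 2 − e^{−t} + (n−1)·∫₀ᵗ e^{−s}·f(t−s) ds. Then there exists a constant C > 0 such that f(t) < C·e^{(n−1)t} for all t ≥ 0. -/

import Mathlib

open MeasureTheory intervalIntegral Set

theorem bound_of_integral_equation (n : ℕ) (hn : 2 ≤ n) (f : ℝ → ℝ)
    (hf : ContinuousOn f (Set.Ici 0))
    (heq : ∀ t : ℝ, 0 ≤ t →
      f t = 2 - Real.exp (-t) +
        ((n : ℝ) - 1) * ∫ s in (0 : ℝ)..t, Real.exp (-s) * f (t - s)) :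
    ∃ C : ℝ, 0 < C ∧ ∀ t : ℝ, 0 ≤ t → f t < C * Real.exp (((n : ℝ) - 1) * t) := by
  set c : ℝ := (n : ℝ) - 1 with hc_def
  have hn2 : (2:ℝ) ≤ (n:ℝ) := by exact_mod_cast hn
  have hc : 1 ≤ c := by simp only [hc_def]; linarith
  have hc0 : 0 < c := by linarith
  set h : ℝ → ℝ := fun u => Real.exp u * f u with hh
  have hhc : ContinuousOn h (Ici 0) := Real.continuous_exp.continuousOn.mul hf
  set F : ℝ → ℝ := fun t => ∫ u in (0:ℝ)..t, h u with hFdef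
  -- rewrite the integral equation in terms of F
  have heq' : ∀ t : ℝ, 0 ≤ t → f t = 2 - Real.exp (-t) + c * (Real.exp (-t) * F t) := by
    intro t ht
    have h1 : (∫ s in (0:ℝ)..t, Real.exp (-s) * f (t - s))
        = ∫ u in (0:ℝ)..t, Real.exp (u - t) * f u := by
      have h0 := intervalIntegral.integral_comp_sub_left
        (a := 0) (b := t) (fun u => Real.exp (u - t) * f u) t
      simp only [sub_self, sub_zero] at h0
      rw [← h0]
      apply intervalIntegral.integral_congr
      intro s _
      have : t - s - t = -s := by ring
      simp only [this]
    have h2 : (∫ u in (0:ℝ)..t, Real.exp (u - t) * f u) = Real.exp (-t) * F t := by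
      simp only [hFdef, hh]
      rw [← intervalIntegral.integral_const_mul]
      apply intervalIntegral.integral_congr
      intro u _
      show Real.exp (u - t) * f u = Real.exp (-t) * (Real.exp u * f u)
      rw [Real.exp_sub, Real.exp_neg]
      ring
    rw [heq t ht, h1, h2]
  -- integrability of h on [0, t]
  have hInt : ∀ t : ℝ, 0 ≤ t → IntervalIntegrable h volume 0 t := by
    intro t ht
    apply ContinuousOn.intervalIntegrable
    apply hhc.mono
    rw [uIcc_of_le ht]
    exact Icc_subset_Ici_self
  -- continuity of F on Ici 0
  have hFcont : ContinuousOn F (Ici 0) := by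
    intro t ht
    have ht' : (0:ℝ) ≤ t := ht
    have hmem : uIcc (0:ℝ) (t + 1) ∈ nhdsWithin t (Ici 0) := by
      rw [uIcc_of_le (by linarith : (0:ℝ) ≤ t + 1)]
      exact Filter.inter_mem (self_mem_nhdsWithin)
        (nhdsWithin_le_nhds (Iic_mem_nhds (by linarith)))
    have hcI : ContinuousOn F (uIcc (0:ℝ) (t + 1)) :=
      intervalIntegral.continuousOn_primitive_interval' (hInt (t + 1) (by linarith))
        left_mem_uIcc
    exact (hcI t (by rw [uIcc_of_le (by linarith)]; exact ⟨ht, by linarith⟩)).mono_of_mem_nhdsWithin hmem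
  -- G and its derivative on the interior
  set G : ℝ → ℝ := fun t => Real.exp (-(c * t)) * F t - 2 * t with hGdef
  have hGderiv : ∀ t : ℝ, 0 < t →
      HasDerivAt G (Real.exp (-(c * t)) * (-c) * F t + Real.exp (-(c * t)) * h t - 2) t := by
    intro t ht
    have hFat : HasDerivAt F (h t) t :=
      intervalIntegral.integral_hasDerivAt_right (hInt t ht.le)
        ⟨Ici 0, Ici_mem_nhds ht, hhc.aestronglyMeasurable measurableSet_Ici⟩
        (hhc.continuousAt (Ici_mem_nhds ht))
    have hexp : HasDerivAt (fun t : ℝ => Real.exp (-(c * t))) (Real.exp (-(c * t)) * (-c)) t := by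
      have : HasDerivAt (fun t : ℝ => -(c * t)) (-c) t := by
        exact (((hasDerivAt_id t).const_mul c).neg).congr_deriv (by ring)
      exact this.exp
    have := (hexp.mul hFat).sub ((hasDerivAt_id t).const_mul 2)
    exact this.congr_deriv (by ring)
  have hGderiv_nonpos : ∀ t : ℝ, 0 < t →
      Real.exp (-(c * t)) * (-c) * F t + Real.exp (-(c * t)) * h t - 2 ≤ 0 := by
    intro t ht
    have hft := heq' t ht.le
    have hexpinv : Real.exp t * Real.exp (-t) = 1 := by
      rw [← Real.exp_add]; simp
    have hht : h t = 2 * Real.exp t - 1 + c * F t := by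
      show Real.exp t * f t = _
      rw [hft]
      linear_combination (c * F t - 1) * hexpinv
    rw [hht]
    have h1 : Real.exp (-(c * t)) * Real.exp t = Real.exp (t - c * t) := by
      rw [← Real.exp_add]; ring_nf
    have h2 : Real.exp (t - c * t) ≤ 1 := by
      have := Real.exp_le_exp.mpr (show t - c * t ≤ (0:ℝ) by nlinarith)
      simpa using this
    have h3 : 0 < Real.exp (-(c * t)) := Real.exp_pos _
    nlinarith [h1, h2, h3]
  -- G is antitone on Ici 0
  have hGanti : AntitoneOn G (Ici 0) := by
    apply antitoneOn_of_deriv_nonpos (convex_Ici 0)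
    · apply ContinuousOn.sub
      · exact (Real.continuous_exp.comp (continuous_const.mul continuous_id).neg).continuousOn.mul hFcont
      · exact (continuous_const.mul continuous_id).continuousOn
    · intro t ht
      rw [interior_Ici] at ht
      exact ((hGderiv t ht).differentiableAt).differentiableWithinAt
    · intro t ht
      rw [interior_Ici] at ht
      rw [(hGderiv t ht).deriv]
      exact hGderiv_nonpos t ht
  have hG0 : G 0 = 0 := by simp [hGdef, hFdef]
  have hFbound : ∀ t : ℝ, 0 ≤ t → F t ≤ 2 * t * Real.exp (c * t) := by
    intro t ht
    have := hGanti (self_mem_Ici) ht ht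
    rw [hG0] at this
    have h1 : Real.exp (-(c * t)) * F t ≤ 2 * t := by
      simp only [hGdef] at this; linarith
    have h2 : Real.exp (-(c * t)) * Real.exp (c * t) = 1 := by
      rw [← Real.exp_add]; simp
    have h3 : 0 < Real.exp (c * t) := Real.exp_pos _
    calc F t = Real.exp (-(c * t)) * F t * Real.exp (c * t) := by
            rw [mul_comm (Real.exp (-(c * t))) (F t), mul_assoc, h2, mul_one]
      _ ≤ 2 * t * Real.exp (c * t) := mul_le_mul_of_nonneg_right h1 h3.le
  refine ⟨2 * n, by positivity, fun t ht => ?_⟩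
  have hft := heq' t ht
  have hFb := hFbound t ht
  have he1 : 0 < Real.exp (-t) := Real.exp_pos _
  have he2 : Real.exp (-t) * Real.exp t = 1 := by rw [← Real.exp_add]; simp
  have he3 : 1 ≤ Real.exp (c * t) := Real.one_le_exp (by positivity)
  have he4 : t < Real.exp t := by nlinarith [Real.add_one_le_exp t]
  have he5 : 0 < Real.exp (c * t) := Real.exp_pos _
  have he6 : 0 < Real.exp t := Real.exp_pos _
  have key : c * (Real.exp (-t) * F t) < 2 * c * Real.exp (c * t) := by
    have : Real.exp (-t) * F t ≤ Real.exp (-t) * (2 * t * Real.exp (c * t)) :=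
      mul_le_mul_of_nonneg_left hFb he1.le
    have h2 : Real.exp (-t) * (2 * t * Real.exp (c * t))
        < Real.exp (-t) * (2 * Real.exp t * Real.exp (c * t)) := by
      apply mul_lt_mul_of_pos_left _ he1
      nlinarith
    have h3 : Real.exp (-t) * (2 * Real.exp t * Real.exp (c * t)) = 2 * Real.exp (c * t) := by
      nlinarith [he2]
    nlinarith
  have hCn : (2:ℝ) * n = 2 + 2 * c := by simp only [hc_def]; ring
  rw [hft, hCn]
  nlinarith [key, he3, he1]
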